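/- arXiv:1511.01473 — 2 statements merged into one kernel-verified Lean document; each statement's English description precedes it below -/
import Mathlib

section
/- For odd k, the derivative of M_k satisfies M_k'(q) = (q(1-q))^{(k-1)/2} · k · C(k-1, (k-1)/2), where C denotes the binomial coefficient. -/
/-- `Mk k p` is the probability that a majority of `k` independent voters, each voting
'yes' with probability `p`, vote 'yes' (ties broken by a fair coin). -/
noncomputable def Mk (k : ℕ) (p : ℝ) : ℝ :=
  ∑ j ∈ Finset.range (k + 1), (k.choose j : ℝ) * p ^ j * (1 - p) ^ (k - j) *
    (if k < 2 * j then 1 else if 2 * j = k then 1 / 2 else 0)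

private lemma Mk_eq (m : ℕ) (q : ℝ) :
    Mk (2*m+1) q = ∑ j ∈ Finset.Ico (m+1) (2*m+1+1),
      (((2*m+1).choose j : ℝ)) * q ^ j * (1-q) ^ (2*m+1-j) := by
  unfold Mk
  rw [Finset.range_eq_Ico, ← Finset.sum_Ico_consecutive _ (Nat.zero_le (m+1)) (by omega)]
  have h1 : (∑ j ∈ Finset.Ico 0 (m+1), ((2*m+1).choose j : ℝ) * q ^ j * (1-q) ^ (2*m+1-j) *
      (if 2*m+1 < 2 * j then 1 else if 2 * j = 2*m+1 then 1 / 2 else 0)) = 0 := by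
    apply Finset.sum_eq_zero
    intro j hj
    simp only [Finset.mem_Ico] at hj
    rw [if_neg (by omega), if_neg (by omega), mul_zero]
  rw [h1, zero_add]
  apply Finset.sum_congr rfl
  intro j hj
  simp only [Finset.mem_Ico] at hj
  rw [if_pos (by omega), mul_one]

private lemma key (m : ℕ) (q : ℝ) :
    HasDerivAt (Mk (2*m+1))
      ((q * (1 - q)) ^ m * ((2*m+1 : ℕ) : ℝ) * (((2*m).choose m : ℕ) : ℝ)) q := by
  have hfun : Mk (2*m+1) = fun q => ∑ j ∈ Finset.Ico (m+1) (2*m+1+1),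
      (((2*m+1).choose j : ℝ)) * q ^ j * (1-q) ^ (2*m+1-j) := funext (Mk_eq m)
  rw [hfun]
  set F : ℕ → ℝ := fun j => ((2*m+1 : ℕ) : ℝ) * (((2*m).choose (j-1) : ℕ) : ℝ) *
      q ^ (j-1) * (1-q) ^ (2*m+1-j) with hF
  have hsum : (∑ j ∈ Finset.Ico (m+1) (2*m+1+1), (F j - F (j+1)))
      = (q * (1 - q)) ^ m * ((2*m+1 : ℕ) : ℝ) * (((2*m).choose m : ℕ) : ℝ) := by
    rw [Finset.sum_Ico_eq_sum_range]
    have h2 : 2*m+1+1 - (m+1) = m+1 := by omega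
    rw [h2]
    have := Finset.sum_range_sub' (fun i => F (m+1+i)) (m+1)
    calc (∑ i ∈ Finset.range (m+1), (F (m+1+i) - F (m+1+i+1)))
        = F (m+1+0) - F (m+1+(m+1)) := Finset.sum_range_sub' (fun i => F (m+1+i)) (m+1)
      _ = _ := by
          have hz : (2*m).choose (m+1+(m+1)-1) = 0 := by
            apply Nat.choose_eq_zero_of_lt; omega
          have hm1 : m+1+0-1 = m := by omega
          have hm2 : 2*m+1-(m+1+0) = m := by omega
          rw [hF]
          simp only [hz, Nat.cast_zero, mul_zero, zero_mul, sub_zero, hm1, hm2]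
          rw [mul_pow]
          ring
  rw [← hsum]
  apply HasDerivAt.fun_sum
  intro j hj
  simp only [Finset.mem_Ico] at hj
  have hj1 : 1 ≤ j := by omega
  have hjk : j ≤ 2*m+1 := by omega
  -- derivative of each term
  have hq : HasDerivAt (fun x : ℝ => x ^ j) ((j : ℝ) * q ^ (j-1)) q := hasDerivAt_pow j q
  have hlin : HasDerivAt (fun x : ℝ => 1 - x) (-1) q := by
    simpa using (hasDerivAt_const q (1:ℝ)).fun_sub (hasDerivAt_id' q)
  have h1q : HasDerivAt (fun x : ℝ => (1-x) ^ (2*m+1-j))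
      (((2*m+1-j : ℕ) : ℝ) * (1-q) ^ (2*m+1-j-1) * (-1)) q :=
    (hasDerivAt_pow (2*m+1-j) (1-q)).comp q hlin
  have hterm := ((hq.const_mul (((2*m+1).choose j : ℝ))).fun_mul h1q)
  refine hterm.congr_deriv ?_
  -- arithmetic identity
  have c1 : (j : ℝ) * ((2*m+1).choose j : ℝ) = ((2*m+1 : ℕ) : ℝ) * ((2*m).choose (j-1) : ℝ) := by
    have : (2*m+1) * ((2*m).choose (j-1)) = (2*m+1).choose j * j := by
      have hjj : j - 1 + 1 = j := by omega
      simpa [Nat.succ_eq_add_one, hjj] using Nat.add_one_mul_choose_eq (2*m) (j-1)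
    have := congrArg (fun n : ℕ => (n : ℝ)) this
    push_cast at this ⊢
    linarith
  have c2 : ((2*m+1-j : ℕ) : ℝ) * ((2*m+1).choose j : ℝ)
      = ((2*m+1 : ℕ) : ℝ) * ((2*m).choose j : ℝ) := by
    have h1 : (2*m+1) * ((2*m).choose j) = (2*m+1).choose (j+1) * (j+1) :=
      Nat.add_one_mul_choose_eq (2*m) j
    have h2 : (2*m+1).choose (j+1) * (j+1) = (2*m+1).choose j * (2*m+1 - j) :=
      Nat.choose_succ_right_eq (2*m+1) j
    have h3 : (2*m+1) * ((2*m).choose j) = (2*m+1).choose j * (2*m+1-j) := h1.trans h2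
    have := congrArg (fun n : ℕ => (n : ℝ)) h3
    push_cast [Nat.cast_sub hjk] at this ⊢
    linarith
  have hFj : F j = ((2*m+1).choose j : ℝ) * ((j:ℝ) * q ^ (j-1)) * (1-q) ^ (2*m+1-j) := by
    rw [hF]
    simp only []
    rw [show ((2*m+1).choose j : ℝ) * ((j:ℝ) * q ^ (j-1)) = ((j:ℝ) * ((2*m+1).choose j : ℝ)) * q^(j-1) by ring, c1]
  have hFj1 : F (j+1) = ((2*m+1).choose j : ℝ) * q ^ j * (((2*m+1-j : ℕ):ℝ) * (1-q) ^ (2*m+1-j-1)) := by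
    rw [hF]
    simp only []
    have e1 : j + 1 - 1 = j := by omega
    have e2 : 2*m+1-(j+1) = 2*m+1-j-1 := by omega
    rw [e1, e2,
      show ((2*m+1).choose j : ℝ) * q ^ j * (((2*m+1-j : ℕ):ℝ) * (1-q) ^ (2*m+1-j-1))
        = (((2*m+1-j : ℕ):ℝ) * ((2*m+1).choose j : ℝ)) * q^j * (1-q)^(2*m+1-j-1) by ring, c2]
  rw [hFj, hFj1]
  ring

theorem stmt1 (k : ℕ) (hk : Odd k) (q : ℝ) :
    deriv (Mk k) q =
      (q * (1 - q)) ^ ((k - 1) / 2) * (k : ℝ) * ((k - 1).choose ((k - 1) / 2) : ℝ) := by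
  obtain ⟨m, rfl⟩ := hk
  have h1 : 2*m+1-1 = 2*m := by omega
  have h2 : (2*m)/2 = m := by omega
  rw [h1, h2, (key m q).deriv]
end

section
/- Let k > 1 be real, let M : [0,1] → [0,1] be continuous, strictly increasing, with M(0)=0, M(1/2)=1/2, M(1)=1, strictly convex on [0,1/2] and strictly concave on [1/2,1], and suppose M(q) < q on some point of (0,1/2). Define ε* by 1/(1-ε*) = max_{q ∈ (0,1]} M(q)/q, achieved at q*. Then 0 < ε* < 1/2 and q* > 1/2, and for every ε ∈ [0, ε*] there exists q ≥ q* in (0,1] with M(q)/q = 1/(1-ε). -/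
theorem stmt17 (k : ℝ) (hk : 1 < k) (M : ℝ → ℝ)
    (hcont : ContinuousOn M (Set.Icc 0 1))
    (hmono : StrictMonoOn M (Set.Icc 0 1))
    (hrange : ∀ q ∈ Set.Icc (0 : ℝ) 1, M q ∈ Set.Icc (0 : ℝ) 1)
    (h0 : M 0 = 0) (hhalf : M (1 / 2) = 1 / 2) (h1 : M 1 = 1)
    (hconvex : StrictConvexOn ℝ (Set.Icc (0 : ℝ) (1 / 2)) M)
    (hconcave : StrictConcaveOn ℝ (Set.Icc (1 / 2 : ℝ) 1) M)
    (hbelow : ∃ q ∈ Set.Ioo (0 : ℝ) (1 / 2), M q < q)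
    (εs qs : ℝ) (hqs : qs ∈ Set.Ioc (0 : ℝ) 1)
    (hmax : ∀ q ∈ Set.Ioc (0 : ℝ) 1, M q / q ≤ M qs / qs)
    (hεs : 1 / (1 - εs) = M qs / qs) :
    0 < εs ∧ εs < 1 / 2 ∧ 1 / 2 < qs ∧
      ∀ ε ∈ Set.Icc (0 : ℝ) εs, ∃ q ∈ Set.Ioc (0 : ℝ) 1, qs ≤ q ∧ M q / q = 1 / (1 - ε) := by
  -- M is above the diagonal on (1/2, 1)
  have habove : ∀ q ∈ Set.Ioo (1/2 : ℝ) 1, q < M q := by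
    intro q hq
    have hcc := hconcave.2
    have h := hcc (x := 1/2) (y := 1) (a := 2 - 2*q) (b := 2*q - 1)
      (Set.left_mem_Icc.2 (by norm_num)) (Set.right_mem_Icc.2 (by norm_num)) (by norm_num)
      (by linarith [hq.2]) (by linarith [hq.1]) (by ring)
    simp only [smul_eq_mul] at h
    rw [hhalf, h1] at h
    have e : (2 - 2*q) * (1/2) + (2*q - 1) * 1 = q := by ring
    rw [e] at h
    linarith
  -- M is below the diagonal on (0, 1/2)
  have hbelow' : ∀ q ∈ Set.Ioo (0 : ℝ) (1/2), M q < q := by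
    intro q hq
    have hcv := hconvex.2
    have h := hcv (x := 0) (y := 1/2) (a := 1 - 2*q) (b := 2*q)
      (Set.left_mem_Icc.2 (by norm_num)) (Set.right_mem_Icc.2 (by norm_num)) (by norm_num)
      (by linarith [hq.2]) (by linarith [hq.1]) (by ring)
    simp only [smul_eq_mul] at h
    rw [h0, hhalf] at h
    have e : (1 - 2*q) * 0 + 2*q * (1/2) = q := by ring
    rw [e] at h
    linarith
  have hqs0 : (0 : ℝ) < qs := hqs.1
  -- the max ratio r = M qs / qs is > 1
  have h34 : (3/4 : ℝ) < M (3/4) := habove (3/4) (by norm_num)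
  have hr1 : 1 < M qs / qs := by
    have h := hmax (3/4) (by norm_num)
    have : (1 : ℝ) < M (3/4) / (3/4) := by
      rw [lt_div_iff₀ (by norm_num)]; linarith
    linarith
  -- qs > 1/2
  have hqshalf : 1/2 < qs := by
    by_contra hc
    push_neg at hc
    have hMle : M qs ≤ qs := by
      rcases lt_or_eq_of_le hc with h | h
      · exact (hbelow' qs ⟨hqs0, h⟩).le
      · rw [h, hhalf]
    have : M qs / qs ≤ 1 := by
      rw [div_le_one hqs0]; exact hMle
    linarith
  -- r < 2
  have hr2 : M qs / qs < 2 := by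
    have hM1 : M qs ≤ 1 := (hrange qs ⟨hqs0.le, hqs.2⟩).2
    rw [div_lt_iff₀ hqs0]
    linarith
  -- solve for εs
  have hden : 0 < 1 - εs := by
    by_contra hc
    push_neg at hc
    have : 1 / (1 - εs) ≤ 0 := div_nonpos_of_nonneg_of_nonpos zero_le_one (by linarith)
    linarith [hεs ▸ this]
  have hεs1 : 1 < 1 / (1 - εs) := hεs ▸ hr1
  have hεs2 : 1 / (1 - εs) < 2 := hεs ▸ hr2
  have hε0 : 0 < εs := by
    rw [lt_div_iff₀ hden] at hεs1; linarith
  have hεhalf : εs < 1/2 := by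
    rw [div_lt_iff₀ hden] at hεs2; linarith
  refine ⟨hε0, hεhalf, hqshalf, ?_⟩
  intro ε hε
  set t := 1 / (1 - ε) with ht
  have hdenε : 0 < 1 - ε := by
    have := hε.2; linarith
  have ht1 : 1 ≤ t := by
    rw [ht, le_div_iff₀ hdenε]; linarith [hε.1]
  have ht2 : t ≤ M qs / qs := by
    rw [← hεs, ht]
    apply div_le_div_of_nonneg_left zero_le_one hden
    linarith [hε.2]
  -- IVT on f q = M q / q over [qs, 1]
  have hfc : ContinuousOn (fun q => M q / q) (Set.Icc qs 1) := by
    apply ContinuousOn.div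
    · exact hcont.mono (Set.Icc_subset_Icc hqs0.le le_rfl)
    · exact continuousOn_id
    · intro x hx; exact ne_of_gt (lt_of_lt_of_le hqs0 hx.1)
  have hsub := intermediate_value_Icc' hqs.2 hfc
  have hmem : t ∈ Set.Icc ((fun q => M q / q) 1) ((fun q => M q / q) qs) := by
    simp only [h1]
    constructor
    · simpa using ht1
    · exact ht2
  obtain ⟨q, hqmem, hfq⟩ := hsub hmem
  exact ⟨q, ⟨lt_of_lt_of_le hqs0 hqmem.1, hqmem.2⟩, hqmem.1, hfq⟩
end
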